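/- For any modal formula A, the following are equivalent: (1) A is a theorem of MNF; (2) A is valid in all transitive MN-frames; (3) A is valid in all finite transitive MN-frames. -/

import Mathlib

/-- Modal formulas: variables, ⊥, →, □. -/
inductive Fml : Type
  | var : ℕ → Fml
  | bot : Fml
  | imp : Fml → Fml → Fml
  | box : Fml → Fml
  deriving DecidableEq

namespace Fml

/-- ¬A is an abbreviation for A → ⊥. -/
def neg (A : Fml) : Fml := imp A bot

/-- ⊤ is an abbreviation for ¬⊥. -/
def top : Fml := neg bot

/-- A ∧ B is an abbreviation for ¬(A → ¬B). -/
def and (A B : Fml) : Fml := neg (imp A (neg B))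

/-- Uniform substitution. -/
def subst (σ : ℕ → Fml) : Fml → Fml
  | var n => σ n
  | bot => bot
  | imp A B => imp (subst σ A) (subst σ B)
  | box A => box (subst σ A)

end Fml

/-- A formula is a propositional tautology if it is true under every valuation
that respects ⊥ and →, treating variables and boxed formulas as atoms. -/
def IsTautology (A : Fml) : Prop :=
  ∀ val : Fml → Bool,
    (val Fml.bot = false) →
    (∀ B C : Fml, val (Fml.imp B C) = (!(val B) || val C)) →
    val A = true

/-- Provability in the extension of the logic MN by the axioms in `Ax`:
axioms are all propositional tautologies and the members of `Ax`; the rules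
are Modus Ponens, Necessitation, and RM. -/
inductive MNProv (Ax : Fml → Prop) : Fml → Prop
  | taut {A : Fml} : IsTautology A → MNProv Ax A
  | ax {A : Fml} : Ax A → MNProv Ax A
  | mp {A B : Fml} : MNProv Ax (A.imp B) → MNProv Ax A → MNProv Ax B
  | nec {A : Fml} : MNProv Ax A → MNProv Ax A.box
  | rm {A B : Fml} : MNProv Ax (A.imp B) → MNProv Ax (A.box.imp B.box)

/-- The axiom P : ¬□⊥. -/
def AxP : Fml → Prop := fun A => A = (Fml.box Fml.bot).neg

/-- The axiom scheme D : ¬(□B ∧ □¬B). -/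
def AxD : Fml → Prop := fun A => ∃ B : Fml, A = ((B.box).and (B.neg.box)).neg

/-- The axiom scheme 4 : □B → □□B. -/
def AxF : Fml → Prop := fun A => ∃ B : Fml, A = B.box.imp B.box.box

def MN : Fml → Prop := MNProv (fun _ => False)
def MNP : Fml → Prop := MNProv AxP
def MND : Fml → Prop := MNProv AxD
def MNF : Fml → Prop := MNProv AxF
def MNPF : Fml → Prop := MNProv (fun A => AxP A ∨ AxF A)
def MNDF : Fml → Prop := MNProv (fun A => AxD A ∨ AxF A)

/-- An MN-frame: a nonempty set `W` together with a relation between worlds and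
nonempty subsets of `W` satisfying monotonicity. -/
structure MNFrame (W : Type*) where
  nonempty : Nonempty W
  rel : W → Set W → Prop
  rel_nonempty : ∀ (x : W) (V : Set W), rel x V → V.Nonempty
  mono : ∀ (x : W) (V U : Set W), rel x V → V ⊆ U → rel x U

/-- `Sat` is a satisfaction relation on the MN-frame `F`. -/
structure IsSat {W : Type*} (F : MNFrame W) (Sat : W → Fml → Prop) : Prop where
  bot : ∀ x : W, ¬ Sat x Fml.bot
  imp : ∀ (x : W) (A B : Fml), Sat x (A.imp B) ↔ (Sat x A → Sat x B)
  box : ∀ (x : W) (A : Fml), Sat x A.box ↔ ∀ V : Set W, F.rel x V → ∃ y ∈ V, Sat y A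

/-- A formula is valid in an MN-frame if it is satisfied at every world under
every satisfaction relation on the frame. -/
def Valid {W : Type*} (F : MNFrame W) (A : Fml) : Prop :=
  ∀ Sat : W → Fml → Prop, IsSat F Sat → ∀ x : W, Sat x A

/-- Transitivity of an MN-frame. -/
def MNFrame.IsTransitive {W : Type*} (F : MNFrame W) : Prop :=
  ∀ (x : W) (V : Set W) (U : W → Set W),
    F.rel x V → (∀ y ∈ V, F.rel y (U y)) → F.rel x (⋃ y ∈ V, U y)

/-- MNP-frames: every world is related to some subset. -/
def MNFrame.IsMNP {W : Type*} (F : MNFrame W) : Prop :=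
  ∀ x : W, ∃ V : Set W, F.rel x V

/-- MND-frames: every world is related to `V` or to its complement. -/
def MNFrame.IsMND {W : Type*} (F : MNFrame W) : Prop :=
  ∀ (x : W) (V : Set W), F.rel x V ∨ F.rel x Vᶜ

namespace Stmt6Aux

/-! ### Propositional toolkit -/

def Resp (v : Fml → Bool) : Prop :=
  v Fml.bot = false ∧ ∀ B C : Fml, v (Fml.imp B C) = (!(v B) || v C)

lemma Resp.negv {v : Fml → Bool} (hv : Resp v) (B : Fml) : v B.neg = !(v B) := by
  rw [Fml.neg, hv.2, hv.1, Bool.or_false]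

lemma Resp.topv {v : Fml → Bool} (hv : Resp v) : v Fml.top = true := by
  rw [Fml.top, hv.negv, hv.1]; rfl

lemma Resp.andv {v : Fml → Bool} (hv : Resp v) (B C : Fml) :
    v (B.and C) = (v B && v C) := by
  rw [Fml.and, hv.negv, hv.2, hv.negv]
  cases v B <;> cases v C <;> rfl

lemma mnf_taut {E : Fml} (h : ∀ v, Resp v → v E = true) : MNF E :=
  MNProv.taut (fun val h1 h2 => h val ⟨h1, h2⟩)

lemma mnf_mp {E F : Fml} (h1 : MNF (E.imp F)) (h2 : MNF E) : MNF F :=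
  MNProv.mp h1 h2

lemma tc1 {E1 F : Fml} (h1 : MNF E1)
    (h : ∀ v, Resp v → v E1 = true → v F = true) : MNF F := by
  refine mnf_mp (mnf_taut fun v hv => ?_) h1
  rw [hv.2]
  cases hE1 : v E1
  · simp
  · simp [h v hv hE1]

lemma tc2 {E1 E2 F : Fml} (h1 : MNF E1) (h2 : MNF E2)
    (h : ∀ v, Resp v → v E1 = true → v E2 = true → v F = true) : MNF F := by
  refine mnf_mp (tc1 h1 (fun v hv hE1 => ?_)) h2
  rw [hv.2]
  cases hE2 : v E2
  · simp
  · simp [h v hv hE1 hE2]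

lemma tc3 {E1 E2 E3 F : Fml} (h1 : MNF E1) (h2 : MNF E2) (h3 : MNF E3)
    (h : ∀ v, Resp v → v E1 = true → v E2 = true → v E3 = true → v F = true) :
    MNF F := by
  refine mnf_mp (tc2 h1 h2 (fun v hv hE1 hE2 => ?_)) h3
  rw [hv.2]
  cases hE3 : v E3
  · simp
  · simp [h v hv hE1 hE2 hE3]

lemma mnf_imp_trans {B C D : Fml} (h1 : MNF (B.imp C)) (h2 : MNF (C.imp D)) :
    MNF (B.imp D) :=
  tc2 h1 h2 (fun v hv hv1 hv2 => by
    rw [hv.2] at hv1 hv2 ⊢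
    cases hB : v B <;> cases hC : v C <;> cases hD : v D <;> simp_all)

/-! ### Subformulas -/

def subl : Fml → List Fml
  | .var n => [.var n]
  | .bot => [.bot]
  | .imp B C => .imp B C :: (subl B ++ subl C)
  | .box B => .box B :: subl B

lemma subl_self : ∀ B : Fml, B ∈ subl B := by
  intro B; cases B <;> simp [subl]

lemma subl_trans : ∀ (D : Fml) {B C : Fml}, B ∈ subl D → C ∈ subl B → C ∈ subl D := by
  intro D
  induction D with
  | var n =>
      intro B C hB hC
      simp [subl] at hB; subst hB; simpa [subl] using hC
  | bot =>
      intro B C hB hC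
      simp [subl] at hB; subst hB; simpa [subl] using hC
  | imp D1 D2 ih1 ih2 =>
      intro B C hB hC
      rcases List.mem_cons.1 hB with rfl | hB'
      · exact hC
      · rcases List.mem_append.1 hB' with h | h
        · exact List.mem_cons_of_mem _ (List.mem_append.2 (Or.inl (ih1 h hC)))
        · exact List.mem_cons_of_mem _ (List.mem_append.2 (Or.inr (ih2 h hC)))
  | box D ih =>
      intro B C hB hC
      rcases List.mem_cons.1 hB with rfl | hB'
      · exact hC
      · exact List.mem_cons_of_mem _ (ih hB' hC)

def Lof (A₀ : Fml) : List Fml := (subl A₀).dedup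

def SFof (A₀ : Fml) : Finset Fml := (Lof A₀).toFinset

lemma mem_L_iff {A₀ B : Fml} : B ∈ Lof A₀ ↔ B ∈ SFof A₀ := List.mem_toFinset.symm

lemma mem_SF_iff {A₀ B : Fml} : B ∈ SFof A₀ ↔ B ∈ subl A₀ := by
  simp [SFof, Lof, List.mem_toFinset, List.mem_dedup]

lemma SF_self (A₀ : Fml) : A₀ ∈ SFof A₀ := mem_SF_iff.2 (subl_self A₀)

lemma SF_down {A₀ B C : Fml} (hB : B ∈ SFof A₀) (hC : C ∈ subl B) : C ∈ SFof A₀ :=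
  mem_SF_iff.2 (subl_trans A₀ (mem_SF_iff.1 hB) hC)

lemma SF_imp1 {A₀ B C : Fml} (h : Fml.imp B C ∈ SFof A₀) : B ∈ SFof A₀ :=
  SF_down h (List.mem_cons_of_mem _ (List.mem_append.2 (Or.inl (subl_self B))))

lemma SF_imp2 {A₀ B C : Fml} (h : Fml.imp B C ∈ SFof A₀) : C ∈ SFof A₀ :=
  SF_down h (List.mem_cons_of_mem _ (List.mem_append.2 (Or.inr (subl_self C))))

lemma SF_box {A₀ B : Fml} (h : Fml.box B ∈ SFof A₀) : B ∈ SFof A₀ :=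
  SF_down h (List.mem_cons_of_mem _ (subl_self B))

/-! ### Atoms -/

def lit (z : Finset Fml) (B : Fml) : Fml := if B ∈ z then B else B.neg

def cnj (z : Finset Fml) : List Fml → Fml
  | [] => Fml.top
  | B :: l => (lit z B).and (cnj z l)

lemma v_cnj {v : Fml → Bool} (hv : Resp v) (z : Finset Fml) (l : List Fml) :
    v (cnj z l) = true ↔ ∀ B ∈ l, v (lit z B) = true := by
  induction l with
  | nil => simp [cnj, hv.topv]
  | cons B l ih => simp [cnj, hv.andv, Bool.and_eq_true, ih]

lemma cnj_congr {z z' : Finset Fml} :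
    ∀ (l : List Fml), (∀ B ∈ l, (B ∈ z ↔ B ∈ z')) → cnj z l = cnj z' l := by
  intro l
  induction l with
  | nil => intro _; rfl
  | cons B l ih =>
      intro h
      have hB := h B List.mem_cons_self
      have hl := ih (fun C hC => h C (List.mem_cons_of_mem _ hC))
      by_cases hz : B ∈ z
      · have hz' : B ∈ z' := hB.1 hz
        simp [cnj, lit, hz, hz', hl]
      · have hz' : B ∉ z' := fun h' => hz (hB.2 h')
        simp [cnj, lit, hz, hz', hl]

lemma proj_lit {z : Finset Fml} {l : List Fml} {B : Fml} (hB : B ∈ l) :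
    MNF ((cnj z l).imp (lit z B)) := by
  refine mnf_taut fun v hv => ?_
  rw [hv.2]
  cases hc : v (cnj z l)
  · simp
  · simp [((v_cnj hv z l).1 hc) B hB]

lemma projP {A₀ : Fml} {z : Finset Fml} {B : Fml} (hB : B ∈ SFof A₀) (hz : B ∈ z) :
    MNF ((cnj z (Lof A₀)).imp B) := by
  have := proj_lit (z := z) (mem_L_iff.2 hB)
  rwa [lit, if_pos hz] at this

lemma projN {A₀ : Fml} {z : Finset Fml} {B : Fml} (hB : B ∈ SFof A₀) (hz : B ∉ z) :
    MNF ((cnj z (Lof A₀)).imp B.neg) := by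
  have := proj_lit (z := z) (mem_L_iff.2 hB)
  rwa [lit, if_neg hz] at this

lemma cover (E : Fml) :
    ∀ l : List Fml, l.Nodup → (∀ z : Finset Fml, MNF ((cnj z l).imp E)) → MNF E := by
  intro l
  induction l with
  | nil =>
      intro _ h
      exact mnf_mp (h ∅) (mnf_taut fun v hv => hv.topv)
  | cons B l ih =>
      intro hnd h
      obtain ⟨hBl, hndl⟩ := List.nodup_cons.1 hnd
      refine ih hndl fun z => ?_
      have e1 : cnj (insert B z) l = cnj z l :=
        cnj_congr l (fun C hC => by
          have hne : C ≠ B := fun h' => hBl (h' ▸ hC)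
          simp [Finset.mem_insert, hne])
      have e2 : cnj (z.erase B) l = cnj z l :=
        cnj_congr l (fun C hC => by
          have hne : C ≠ B := fun h' => hBl (h' ▸ hC)
          simp [Finset.mem_erase, hne])
      have h1 := h (insert B z)
      have h2 := h (z.erase B)
      rw [show cnj (insert B z) (B :: l) = Fml.and B (cnj z l) by
            rw [cnj, lit, if_pos (Finset.mem_insert_self B z), e1]] at h1
      rw [show cnj (z.erase B) (B :: l) = Fml.and B.neg (cnj z l) by
            rw [cnj, lit, if_neg (fun h' => (Finset.mem_erase.1 h').1 rfl), e2]] at h2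
      refine tc2 h1 h2 (fun v hv hv1 hv2 => ?_)
      rw [hv.2] at hv1 hv2 ⊢
      rw [hv.andv] at hv1 hv2
      rw [hv.negv] at hv2
      cases hB' : v B <;> cases hS : v (cnj z l) <;> cases hE : v E <;> simp_all

def ConZ (A₀ : Fml) (z : Finset Fml) : Prop := ¬ MNF ((cnj z (Lof A₀)).neg)

def AtomT (A₀ : Fml) : Type := {z : Finset Fml // z ⊆ SFof A₀ ∧ ConZ A₀ z}

lemma atom_imp (A₀ : Fml) {B C : Fml} (hB : B ∈ SFof A₀) (hC : C ∈ SFof A₀)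
    (h : ∀ z : Finset Fml, z ⊆ SFof A₀ → ConZ A₀ z → B ∈ z → C ∈ z) :
    MNF (B.imp C) := by
  refine cover _ (Lof A₀) (List.nodup_dedup _) fun z => ?_
  have hzz : cnj z (Lof A₀) = cnj (z ∩ SFof A₀) (Lof A₀) :=
    cnj_congr _ (fun D hD => by simp [Finset.mem_inter, mem_L_iff.1 hD])
  rw [hzz]
  by_cases hcon : ConZ A₀ (z ∩ SFof A₀)
  · by_cases hBz : B ∈ z ∩ SFof A₀
    · have hCz : C ∈ z ∩ SFof A₀ := h _ Finset.inter_subset_right hcon hBz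
      refine tc1 (projP hC hCz) fun v hv h1 => ?_
      rw [hv.2] at h1
      rw [hv.2, hv.2]
      cases hc1 : v (cnj (z ∩ SFof A₀) (Lof A₀)) <;> cases hc2 : v B <;> cases hc3 : v C <;> simp_all
    · refine tc1 (projN hB hBz) fun v hv h1 => ?_
      rw [hv.2, hv.negv] at h1
      rw [hv.2, hv.2]
      cases hc1 : v (cnj (z ∩ SFof A₀) (Lof A₀)) <;> cases hc2 : v B <;> cases hc3 : v C <;> simp_all
  · refine tc1 (not_not.1 hcon) fun v hv h1 => ?_
    rw [Fml.neg, hv.2, hv.1] at h1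
    rw [hv.2, hv.2]
    cases hc1 : v (cnj (z ∩ SFof A₀) (Lof A₀)) <;> cases hc2 : v B <;> cases hc3 : v C <;> simp_all

lemma atom_prov (A₀ : Fml) {C : Fml} (hC : C ∈ SFof A₀)
    (h : ∀ z : Finset Fml, z ⊆ SFof A₀ → ConZ A₀ z → C ∈ z) : MNF C := by
  refine cover _ (Lof A₀) (List.nodup_dedup _) fun z => ?_
  have hzz : cnj z (Lof A₀) = cnj (z ∩ SFof A₀) (Lof A₀) :=
    cnj_congr _ (fun D hD => by simp [Finset.mem_inter, mem_L_iff.1 hD])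
  rw [hzz]
  by_cases hcon : ConZ A₀ (z ∩ SFof A₀)
  · have hCz : C ∈ z ∩ SFof A₀ := h _ Finset.inter_subset_right hcon
    exact projP hC hCz
  · refine tc1 (not_not.1 hcon) fun v hv h1 => ?_
    rw [Fml.neg, hv.2, hv.1] at h1
    rw [hv.2]
    cases hc1 : v (cnj (z ∩ SFof A₀) (Lof A₀)) <;> cases hc3 : v C <;> simp_all

lemma mem_of_prov {A₀ : Fml} (x : AtomT A₀) {E : Fml} (hE : MNF E)
    (hESF : E ∈ SFof A₀) : E ∈ x.1 := by
  by_contra hne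
  refine x.2.2 (tc2 (projN hESF hne) hE fun v hv h1 h2 => ?_)
  rw [hv.2, hv.negv] at h1
  rw [Fml.neg, hv.2, hv.1]
  cases hc1 : v (cnj x.1 (Lof A₀)) <;> simp_all

lemma atom_closed {A₀ : Fml} (x : AtomT A₀) {E E' : Fml} (h : MNF (E.imp E'))
    (hE : E ∈ x.1) (hE' : E' ∈ SFof A₀) : E' ∈ x.1 := by
  by_contra hne
  refine x.2.2 (tc3 (projP (x.2.1 hE) hE) (projN hE' hne) h fun v hv h1 h2 h3 => ?_)
  rw [hv.2] at h1 h3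
  rw [hv.2, hv.negv] at h2
  rw [Fml.neg, hv.2, hv.1]
  cases hc1 : v (cnj x.1 (Lof A₀)) <;> cases hc2 : v E <;> cases hc3 : v E' <;> simp_all

lemma bot_not_mem {A₀ : Fml} (x : AtomT A₀) : Fml.bot ∉ x.1 := by
  intro h
  refine x.2.2 (tc1 (projP (x.2.1 h) h) fun v hv h1 => ?_)
  rw [hv.2, hv.1] at h1
  rw [Fml.neg, hv.2, hv.1]
  cases hc1 : v (cnj x.1 (Lof A₀)) <;> simp_all

lemma imp_mem_iff {A₀ : Fml} (x : AtomT A₀) {B C : Fml}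
    (hBC : Fml.imp B C ∈ SFof A₀) :
    Fml.imp B C ∈ x.1 ↔ (B ∈ x.1 → C ∈ x.1) := by
  constructor
  · intro h hB
    by_contra hC
    refine x.2.2 (tc3 (projP hBC h) (projP (SF_imp1 hBC) hB) (projN (SF_imp2 hBC) hC)
      fun v hv h1 h2 h3 => ?_)
    rw [hv.2, hv.2] at h1
    rw [hv.2] at h2
    rw [hv.2, hv.negv] at h3
    rw [Fml.neg, hv.2, hv.1]
    cases hc1 : v (cnj x.1 (Lof A₀)) <;> cases hc2 : v B <;> cases hc3 : v C <;> simp_all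
  · intro h
    by_cases hB : B ∈ x.1
    · have hC := h hB
      by_contra hi
      refine x.2.2 (tc2 (projN hBC hi) (projP (SF_imp2 hBC) hC) fun v hv h1 h2 => ?_)
      rw [hv.2, hv.negv, hv.2] at h1
      rw [hv.2] at h2
      rw [Fml.neg, hv.2, hv.1]
      cases hc1 : v (cnj x.1 (Lof A₀)) <;> cases hc2 : v B <;> cases hc3 : v C <;> simp_all
    · by_contra hi
      refine x.2.2 (tc2 (projN hBC hi) (projN (SF_imp1 hBC) hB) fun v hv h1 h2 => ?_)
      rw [hv.2, hv.negv, hv.2] at h1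
      rw [hv.2, hv.negv] at h2
      rw [Fml.neg, hv.2, hv.1]
      cases hc1 : v (cnj x.1 (Lof A₀)) <;> cases hc2 : v B <;> cases hc3 : v C <;> simp_all

lemma exAtom2 (A₀ : Fml) {B C : Fml} (hB : B ∈ SFof A₀) (hC : C ∈ SFof A₀)
    (h : ¬ MNF (B.imp C)) : ∃ z : AtomT A₀, B ∈ z.1 ∧ C ∉ z.1 := by
  by_contra hn
  push_neg at hn
  exact h (atom_imp A₀ hB hC fun z hz hcon hBz => hn ⟨z, hz, hcon⟩ hBz)

lemma exAtom1 (A₀ : Fml) {C : Fml} (hC : C ∈ SFof A₀) (h : ¬ MNF C) :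
    ∃ z : AtomT A₀, C ∉ z.1 := by
  by_contra hn
  push_neg at hn
  exact h (atom_prov A₀ hC fun z hz hcon => hn ⟨z, hz, hcon⟩)

/-! ### The canonical finite transitive frame -/

inductive Rel (A₀ : Fml) : AtomT A₀ → Set (AtomT A₀) → Prop
  | gen (x : AtomT A₀) (C : Fml) (hC : C.box ∈ SFof A₀) (hCx : C.box ∉ x.1) :
      Rel A₀ x {z : AtomT A₀ | C ∉ z.1}
  | mono {x : AtomT A₀} {V V' : Set (AtomT A₀)} :
      Rel A₀ x V → V ⊆ V' → Rel A₀ x V'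
  | trans {x : AtomT A₀} {V : Set (AtomT A₀)} (U : AtomT A₀ → Set (AtomT A₀)) :
      Rel A₀ x V → (∀ y ∈ V, Rel A₀ y (U y)) → Rel A₀ x (⋃ y ∈ V, U y)

def SatM (A₀ : Fml) : Fml → AtomT A₀ → Prop
  | .var n, x => Fml.var n ∈ x.1
  | .bot, _ => False
  | .imp B C, x => SatM A₀ B x → SatM A₀ C x
  | .box B, x => ∀ V, Rel A₀ x V → ∃ y ∈ V, SatM A₀ B y

lemma rel_ne {A₀ : Fml} {x : AtomT A₀} {V : Set (AtomT A₀)} (h : Rel A₀ x V) :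
    V.Nonempty := by
  induction h with
  | gen x C hC hCx =>
      have hnC : ¬ MNF C := fun hMC => hCx (mem_of_prov x (MNProv.nec hMC) hC)
      obtain ⟨z, hz⟩ := exAtom1 A₀ (SF_box hC) hnC
      exact ⟨z, hz⟩
  | mono h hsub ih =>
      obtain ⟨y, hy⟩ := ih
      exact ⟨y, hsub hy⟩
  | trans U h hU ih ihU =>
      obtain ⟨y, hy⟩ := ih
      obtain ⟨u, hu⟩ := ihU y hy
      exact ⟨u, Set.mem_biUnion hy hu⟩

lemma claim {A₀ B : Fml} (hbox : B.box ∈ SFof A₀)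
    (ih : ∀ y : AtomT A₀, SatM A₀ B y ↔ B ∈ y.1) :
    ∀ {x : AtomT A₀} {V : Set (AtomT A₀)}, Rel A₀ x V → B.box ∈ x.1 →
      (∃ w ∈ V, SatM A₀ B w) ∧ (∃ w ∈ V, B.box ∈ w.1) := by
  intro x V h
  induction h with
  | gen x C hC hCx =>
      intro hBx
      have hB : B ∈ SFof A₀ := SF_box hbox
      have hCSF : C ∈ SFof A₀ := SF_box hC
      have h1 : ¬ MNF (B.imp C) := fun hd =>
        hCx (atom_closed x (MNProv.rm hd) hBx hC)
      have h2 : ¬ MNF (B.box.imp C) := fun hd =>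
        hCx (atom_closed x
          (mnf_imp_trans (MNProv.ax ⟨B, rfl⟩) (MNProv.rm hd)) hBx hC)
      obtain ⟨z1, hz1B, hz1C⟩ := exAtom2 A₀ hB hCSF h1
      obtain ⟨z2, hz2B, hz2C⟩ := exAtom2 A₀ hbox hCSF h2
      exact ⟨⟨z1, hz1C, (ih z1).2 hz1B⟩, ⟨z2, hz2C, hz2B⟩⟩
  | mono h hsub ih' =>
      intro hBx
      obtain ⟨⟨w1, hw1, hs1⟩, ⟨w2, hw2, hs2⟩⟩ := ih' hBx
      exact ⟨⟨w1, hsub hw1, hs1⟩, ⟨w2, hsub hw2, hs2⟩⟩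
  | trans U h hU ih' ihU =>
      intro hBx
      obtain ⟨_, ⟨w, hwV, hwB⟩⟩ := ih' hBx
      obtain ⟨⟨u1, hu1, hs1⟩, ⟨u2, hu2, hs2⟩⟩ := ihU w hwV hwB
      exact ⟨⟨u1, Set.mem_biUnion hwV hu1, hs1⟩, ⟨u2, Set.mem_biUnion hwV hu2, hs2⟩⟩

lemma truth {A₀ : Fml} :
    ∀ (B : Fml), B ∈ SFof A₀ → ∀ x : AtomT A₀, SatM A₀ B x ↔ B ∈ x.1 := by
  intro B
  induction B with
  | var n => intro _ x; simp [SatM]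
  | bot =>
      intro _ x
      simp only [SatM, false_iff]
      exact bot_not_mem x
  | imp B C ihB ihC =>
      intro hBC x
      rw [imp_mem_iff x hBC]
      simp only [SatM]
      constructor
      · intro hs hB
        exact (ihC (SF_imp2 hBC) x).1 (hs ((ihB (SF_imp1 hBC) x).2 hB))
      · intro h hs
        exact (ihC (SF_imp2 hBC) x).2 (h ((ihB (SF_imp1 hBC) x).1 hs))
  | box B ihB =>
      intro hb x
      have ih' : ∀ y : AtomT A₀, SatM A₀ B y ↔ B ∈ y.1 := fun y => ihB (SF_box hb) y
      simp only [SatM]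
      constructor
      · intro hs
        by_contra hnx
        obtain ⟨y, hy, hsy⟩ := hs _ (Rel.gen x B hb hnx)
        exact hy ((ih' y).1 hsy)
      · intro hBx V hV
        exact (claim hb ih' hV hBx).1

lemma complete (A₀ : Fml) (h : ¬ MNF A₀) :
    ∃ (W : Type) (F : MNFrame W), Finite W ∧ F.IsTransitive ∧ ¬ Valid F A₀ := by
  obtain ⟨x₀, hx₀⟩ := exAtom1 A₀ (SF_self A₀) h
  refine ⟨AtomT A₀,
    ⟨⟨x₀⟩, Rel A₀, fun x V hr => rel_ne hr, fun x V U hr hsub => Rel.mono hr hsub⟩,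
    ?_, ?_, ?_⟩
  · exact Finite.of_injective
      (fun z : AtomT A₀ =>
        (⟨z.1, Finset.mem_powerset.2 z.2.1⟩ : {s // s ∈ (SFof A₀).powerset}))
      (fun a b hab => by
        apply Subtype.ext
        have := congrArg Subtype.val hab
        simpa using this)
  · intro x V U hV hU
    exact Rel.trans U hV hU
  · intro hval
    have hsat : IsSat
        (⟨⟨x₀⟩, Rel A₀, fun x V hr => rel_ne hr, fun x V U hr hsub => Rel.mono hr hsub⟩ :
          MNFrame (AtomT A₀))
        (fun (x : AtomT A₀) (B : Fml) => SatM A₀ B x) :=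
      ⟨fun x hx => hx, fun x B C => Iff.rfl, fun x B => Iff.rfl⟩
    exact hx₀ ((truth A₀ (SF_self A₀) x₀).1 (hval _ hsat x₀))

/-! ### Soundness -/

lemma sound {E : Fml} (hp : MNF E) :
    ∀ (W : Type) (F : MNFrame W), F.IsTransitive → Valid F E := by
  have hp' : MNProv AxF E := hp
  clear hp
  induction hp' with
  | @taut A htaut =>
      intro W F ht Sat hS x
      classical
      by_contra hx
      have h1 : (fun B => if Sat x B then true else false) Fml.bot = false := by
        simp [hS.bot x]
      have h2 : ∀ B C : Fml,
          (fun B => if Sat x B then true else false) (B.imp C) =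
          (!((fun B => if Sat x B then true else false) B) ||
            ((fun B => if Sat x B then true else false) C)) := by
        intro B C
        by_cases hB : Sat x B <;> by_cases hC : Sat x C <;>
          simp [hB, hC, hS.imp x B C]
      have := htaut (fun B => if Sat x B then true else false) h1 h2
      simp only [hx, if_false] at this
      exact Bool.false_ne_true this
  | @ax A ha =>
      obtain ⟨B, rfl⟩ := ha
      intro W F ht Sat hS x
      rw [hS.imp]
      intro hb
      rw [hS.box] at hb
      rw [hS.box]
      intro V hV
      by_contra hno
      push_neg at hno
      have hch : ∀ y, ∃ U : Set W, y ∈ V → F.rel y U ∧ ∀ u ∈ U, ¬ Sat u B := by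
        intro y
        by_cases hy : y ∈ V
        · have hy' := hno y hy
          rw [hS.box] at hy'
          push_neg at hy'
          obtain ⟨U, hU1, hU2⟩ := hy'
          exact ⟨U, fun _ => ⟨hU1, hU2⟩⟩
        · exact ⟨∅, fun hc => absurd hc hy⟩
      choose U hU using hch
      have htr := ht x V U hV (fun y hy => (hU y hy).1)
      obtain ⟨u, hu, hSu⟩ := hb _ htr
      rw [Set.mem_iUnion₂] at hu
      obtain ⟨y, hy, huy⟩ := hu
      exact (hU y hy).2 u huy hSu
  | @mp A B h1 h2 ih1 ih2 =>
      intro W F ht Sat hS x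
      exact (hS.imp x A B).1 (ih1 W F ht Sat hS x) (ih2 W F ht Sat hS x)
  | @nec A h ih =>
      intro W F ht Sat hS x
      rw [hS.box]
      intro V hV
      obtain ⟨y, hy⟩ := F.rel_nonempty x V hV
      exact ⟨y, hy, ih W F ht Sat hS y⟩
  | @rm A B h ih =>
      intro W F ht Sat hS x
      rw [hS.imp]
      intro hb
      rw [hS.box] at hb
      rw [hS.box]
      intro V hV
      obtain ⟨y, hy, hA⟩ := hb V hV
      exact ⟨y, hy, (hS.imp y A B).1 (ih W F ht Sat hS y) hA⟩

end Stmt6Aux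

/-- A formula is a theorem of MNF iff it is valid in all transitive
MN-frames iff it is valid in all finite transitive MN-frames. -/
theorem stmt6 (A : Fml) :
    (MNF A ↔ ∀ (W : Type) (F : MNFrame W), F.IsTransitive → Valid F A) ∧
    (MNF A ↔ ∀ (W : Type) (F : MNFrame W), Finite W → F.IsTransitive → Valid F A) := by
  have hcomp : (∀ (W : Type) (F : MNFrame W), Finite W → F.IsTransitive → Valid F A) → MNF A := by
    intro h
    by_contra hn
    obtain ⟨W, F, hfin, ht, hv⟩ := Stmt6Aux.complete A hn
    exact hv (h W F hfin ht)
  constructor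
  · exact ⟨fun h W F ht => Stmt6Aux.sound h W F ht,
      fun h => hcomp (fun W F _ ht => h W F ht)⟩
  · exact ⟨fun h W F _ ht => Stmt6Aux.sound h W F ht, hcomp⟩
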